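/- For every even integer r ≥ 2, Li₂(α^r/L_r) + Li₂(β^r/L_r) = π²/6 + r²·ln²(α) - ln²(L_r), where L_r = α^r + β^r is the r-th Lucas number, α = (1+√5)/2 and β = (1-√5)/2. -/

import Mathlib

noncomputable def Li2 (x : ℝ) : ℝ := ∑' n : ℕ, x ^ (n + 1) / ((n : ℝ) + 1) ^ 2

def lucas : ℕ → ℕ
  | 0 => 2
  | 1 => 1
  | n + 2 => lucas (n + 1) + lucas n

open Real Filter Set Topology

lemma aux_summable : Summable (fun n : ℕ => 1 / ((n : ℝ) + 1) ^ 2) := by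
  have h := (Real.summable_one_div_nat_pow (p := 2)).mpr one_lt_two
  have h2 := h.comp_injective (add_left_injective 1)
  convert h2 using 2 with n
  · rfl
  push_cast
  norm_num

lemma Li2_hasDerivAt {x : ℝ} (hx : |x| < 1) :
    HasDerivAt Li2 (∑' n : ℕ, x ^ n / ((n : ℝ) + 1)) x := by
  set ρ : ℝ := (1 + |x|) / 2 with hρ
  have hρ0 : 0 < ρ := by positivity
  have hρ1 : ρ < 1 := by rw [hρ]; linarith
  have hxρ : |x| < ρ := by rw [hρ]; linarith [abs_nonneg x]
  have := hasDerivAt_tsum_of_isPreconnected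
    (u := fun n : ℕ => ρ ^ n)
    (g := fun (n : ℕ) (y : ℝ) => y ^ (n + 1) / ((n : ℝ) + 1) ^ 2)
    (g' := fun (n : ℕ) (y : ℝ) => y ^ n / ((n : ℝ) + 1))
    (summable_geometric_of_lt_one hρ0.le hρ1)
    (isOpen_Ioo (a := -ρ) (b := ρ)) (isPreconnected_Ioo)
    (fun n y _ => ?_) (fun n y hy => ?_)
    (show (0:ℝ) ∈ Ioo (-ρ) ρ from ⟨by linarith, hρ0⟩)
    ?_ (show x ∈ Ioo (-ρ) ρ by rwa [Set.mem_Ioo, ← abs_lt])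
  · exact this
  · have h1 : HasDerivAt (fun y : ℝ => y ^ (n + 1)) ((n + 1 : ℕ) * y ^ n) y :=
      hasDerivAt_pow (n + 1) y
    have := h1.div_const (((n : ℝ) + 1) ^ 2)
    convert this using 1
    · rfl
    push_cast
    have hn : ((n : ℝ) + 1) ≠ 0 := by positivity
    field_simp
  · rw [Set.mem_Ioo, ← abs_lt] at hy
    have : ‖y ^ n / ((n : ℝ) + 1)‖ ≤ ‖y ^ n‖ := by
      rw [norm_div]
      apply div_le_self (norm_nonneg _)
      rw [Real.norm_eq_abs, abs_of_pos (by positivity)]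
      linarith [Nat.cast_nonneg (α := ℝ) n]
    refine this.trans ?_
    rw [norm_pow, Real.norm_eq_abs]
    exact pow_le_pow_left₀ (abs_nonneg y) hy.le n
  · have h0 : (fun n : ℕ => (0:ℝ) ^ (n + 1) / ((n : ℝ) + 1) ^ 2) = fun _ => (0:ℝ) := by
      funext n; simp
    rw [h0]
    exact summable_zero

lemma Li2_deriv {x : ℝ} (hx0 : x ≠ 0) (hx : |x| < 1) :
    HasDerivAt Li2 (-Real.log (1 - x) / x) x := by
  have h := Li2_hasDerivAt hx
  have hs : HasSum (fun n : ℕ => x ^ (n + 1) / (n + 1)) (-Real.log (1 - x)) :=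
    Real.hasSum_pow_div_log_of_abs_lt_one hx
  have hs2 : HasSum (fun n : ℕ => x ^ n / ((n : ℝ) + 1)) (x⁻¹ * -Real.log (1 - x)) := by
    have h2 := hs.mul_left x⁻¹
    convert h2 using 2 with n
    · rfl
    rw [pow_succ']
    field_simp
  rw [hs2.tsum_eq] at h
  rwa [div_eq_inv_mul]

lemma Li2_continuousOn : ContinuousOn Li2 (Icc (-1 : ℝ) 1) := by
  apply continuousOn_tsum (u := fun n : ℕ => 1 / ((n : ℝ) + 1) ^ 2)
  · intro i
    exact (continuousOn_pow _).div_const _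
  · exact aux_summable
  · intro n x hx
    rw [Real.norm_eq_abs, abs_div, abs_pow, abs_of_pos (by positivity : (0:ℝ) < ((n:ℝ)+1)^2)]
    gcongr
    · exact pow_le_one₀ (abs_nonneg x) (abs_le.mpr ⟨hx.1, hx.2⟩)

lemma Li2_zero : Li2 0 = 0 := by
  simp [Li2, zero_pow]

lemma Li2_one : Li2 1 = Real.pi ^ 2 / 6 := by
  have h := hasSum_zeta_two
  have h1 : HasSum (fun n : ℕ => (1 : ℝ) / ((n : ℝ) + 1) ^ 2) (Real.pi ^ 2 / 6) := by
    have h2 : HasSum (fun n : ℕ => (1 : ℝ) / (((n + 1 : ℕ)) : ℝ) ^ 2) (Real.pi ^ 2 / 6) := by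
      rw [hasSum_nat_add_iff (f := fun n : ℕ => (1 : ℝ) / (n : ℝ) ^ 2) 1]
      simpa using h
    have h3 : (fun n : ℕ => (1 : ℝ) / (((n + 1 : ℕ)) : ℝ) ^ 2)
        = fun n : ℕ => (1 : ℝ) / ((n : ℝ) + 1) ^ 2 := by
      funext n; push_cast; ring
    rwa [h3] at h2
  rw [Li2]
  simpa using h1.tsum_eq

/-- Euler's reflection formula for the dilogarithm. -/
lemma Li2_reflection {x : ℝ} (hx : x ∈ Ioo (0:ℝ) 1) :
    Li2 x + Li2 (1 - x) = Real.pi ^ 2 / 6 - Real.log x * Real.log (1 - x) := by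
  set F : ℝ → ℝ := fun y => Li2 y + Li2 (1 - y) + Real.log y * Real.log (1 - y) with hF
  have hsub : Ioo (0:ℝ) 1 ⊆ Icc (-1:ℝ) 1 := fun y hy => ⟨by linarith [hy.1], hy.2.le⟩
  -- F has zero derivative on Ioo 0 1
  have hderiv : ∀ y ∈ Ioo (0:ℝ) 1, HasDerivAt F 0 y := by
    intro y hy
    obtain ⟨hy0, hy1⟩ := hy
    have hy1' : |y| < 1 := abs_lt.mpr ⟨by linarith, hy1⟩
    have h1y0 : (0:ℝ) < 1 - y := by linarith
    have h1y1 : |1 - y| < 1 := abs_lt.mpr ⟨by linarith, by linarith⟩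
    have d1 : HasDerivAt Li2 (-Real.log (1 - y) / y) y := Li2_deriv (ne_of_gt hy0) hy1'
    have d2 : HasDerivAt (fun z : ℝ => Li2 (1 - z))
        ((-Real.log (1 - (1 - y)) / (1 - y)) * (-1)) y := by
      have inner : HasDerivAt (fun z : ℝ => 1 - z) (-1) y := by
        simpa using (hasDerivAt_id y).const_sub 1
      exact (Li2_deriv (ne_of_gt h1y0) h1y1).comp y inner
    have d3 : HasDerivAt (fun z : ℝ => Real.log z * Real.log (1 - z))
        ((1 / y) * Real.log (1 - y) + Real.log y * ((1 / (1 - y)) * (-1))) y := by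
      have dl1 : HasDerivAt Real.log (1 / y) y := by
        simpa [one_div] using Real.hasDerivAt_log (ne_of_gt hy0)
      have dl2 : HasDerivAt (fun z : ℝ => Real.log (1 - z)) ((1 / (1 - y)) * (-1)) y := by
        have inner : HasDerivAt (fun z : ℝ => 1 - z) (-1) y := by
          simpa using (hasDerivAt_id y).const_sub 1
        have hlog : HasDerivAt Real.log (1 / (1 - y)) (1 - y) := by
          simpa [one_div] using Real.hasDerivAt_log (ne_of_gt h1y0)
        exact hlog.comp y inner
      exact dl1.mul dl2
    have hsum := (d1.add d2).add d3
    convert hsum using 1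
    · rfl
    · rfl
    · rfl
    simp only [sub_sub_cancel]
    field_simp
    ring
  -- hence F is constant on Ioo 0 1
  have hconst : ∀ y ∈ Ioo (0:ℝ) 1, ∀ z ∈ Ioo (0:ℝ) 1, F y = F z := by
    intro y hy z hz
    apply (convex_Ioo (0:ℝ) 1).is_const_of_fderivWithin_eq_zero
      (fun w hw => ((hderiv w hw).differentiableAt).differentiableWithinAt)
      (fun w hw => ?_) hy hz
    rw [fderivWithin_eq_fderiv (isOpen_Ioo.uniqueDiffWithinAt hw)
      ((hderiv w hw).differentiableAt), ((hderiv w hw).hasFDerivAt).fderiv]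
    ext t
    simp
  -- the limit filter is nontrivial
  have hne : (𝓝[Ioo (0:ℝ) 1] 1).NeBot := by
    apply mem_closure_iff_nhdsWithin_neBot.mp
    rw [closure_Ioo (by norm_num : (0:ℝ) ≠ 1)]
    exact ⟨by norm_num, le_refl 1⟩
  -- limits of the three summands at 1⁻
  have t1 : Tendsto Li2 (𝓝[Ioo (0:ℝ) 1] 1) (𝓝 (Real.pi ^ 2 / 6)) := by
    have h := (Li2_continuousOn 1 ⟨by norm_num, le_refl 1⟩).mono hsub
    rwa [ContinuousWithinAt, Li2_one] at h
  have tsub : Tendsto (fun y : ℝ => 1 - y) (𝓝[Ioo (0:ℝ) 1] 1) (𝓝[Ioo (0:ℝ) 1] 0) := by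
    apply tendsto_nhdsWithin_of_tendsto_nhds_of_eventually_within
    · have h : Tendsto (fun y : ℝ => 1 - y) (𝓝 (1:ℝ)) (𝓝 (0:ℝ)) := by
        have hc : Continuous (fun y : ℝ => 1 - y) := continuous_const.sub continuous_id
        have := hc.tendsto (1:ℝ)
        simpa using this
      exact h.mono_left nhdsWithin_le_nhds
    · filter_upwards [self_mem_nhdsWithin] with y hy
      exact ⟨by linarith [hy.2], by linarith [hy.1]⟩
  have t2 : Tendsto (fun y : ℝ => Li2 (1 - y)) (𝓝[Ioo (0:ℝ) 1] 1) (𝓝 0) := by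
    have h := (Li2_continuousOn 0 ⟨by norm_num, by norm_num⟩).mono hsub
    rw [ContinuousWithinAt, Li2_zero] at h
    exact h.comp tsub
  have t3 : Tendsto (fun y : ℝ => Real.log y * Real.log (1 - y))
      (𝓝[Ioo (0:ℝ) 1] 1) (𝓝 0) := by
    have hA : Tendsto (fun y : ℝ => Real.log y / (y - 1)) (𝓝[Ioo (0:ℝ) 1] 1) (𝓝 1) := by
      have h := hasDerivAt_iff_tendsto_slope.mp (Real.hasDerivAt_log one_ne_zero)
      rw [show (1:ℝ)⁻¹ = 1 by norm_num] at h
      have h2 : Tendsto (slope Real.log 1) (𝓝[Ioo (0:ℝ) 1] 1) (𝓝 1) :=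
        h.mono_left (nhdsWithin_mono 1 (fun y hy => ne_of_lt hy.2))
      apply h2.congr
      intro y
      simp [slope_def_field]
    have hB : Tendsto (fun y : ℝ => (y - 1) * Real.log (1 - y))
        (𝓝[Ioo (0:ℝ) 1] 1) (𝓝 0) := by
      have h0 : Tendsto (fun t : ℝ => Real.log t * t) (𝓝[>] (0:ℝ)) (𝓝 0) := by
        simpa using tendsto_log_mul_rpow_nhdsGT_zero (r := 1) zero_lt_one
      have tsub' : Tendsto (fun y : ℝ => 1 - y) (𝓝[Ioo (0:ℝ) 1] 1) (𝓝[>] (0:ℝ)) :=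
        tsub.mono_right (nhdsWithin_mono 0 Ioo_subset_Ioi_self)
      have h1 := h0.comp tsub'
      have h2 := h1.neg
      rw [neg_zero] at h2
      apply h2.congr
      intro y
      simp only [Function.comp]
      ring
    have hAB := hA.mul hB
    rw [one_mul] at hAB
    apply hAB.congr'
    filter_upwards [self_mem_nhdsWithin] with y hy
    have hy1 : y - 1 ≠ 0 := by
      have := hy.2; intro h; apply absurd this; simp [sub_eq_zero.mp h]
    field_simp
  -- combine
  obtain ⟨hx0, hx1⟩ := hx
  have tF : Tendsto F (𝓝[Ioo (0:ℝ) 1] 1) (𝓝 (Real.pi ^ 2 / 6 + 0 + 0)) :=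
    (t1.add t2).add t3
  have tF' : Tendsto F (𝓝[Ioo (0:ℝ) 1] 1) (𝓝 (F x)) := by
    apply Tendsto.congr' _ (tendsto_const_nhds (x := F x))
    filter_upwards [self_mem_nhdsWithin] with y hy
    exact hconst x ⟨hx0, hx1⟩ y hy
  have heq := tendsto_nhds_unique tF' tF
  have hFx : Li2 x + Li2 (1 - x) + Real.log x * Real.log (1 - x)
      = Real.pi ^ 2 / 6 + 0 + 0 := heq
  linarith

lemma lucas_real : ∀ n : ℕ, (lucas n : ℝ)
    = ((1 + Real.sqrt 5) / 2) ^ n + ((1 - Real.sqrt 5) / 2) ^ n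
  | 0 => by norm_num [lucas]
  | 1 => by
      show ((1 : ℕ) : ℝ) = _
      push_cast
      ring
  | n + 2 => by
      have h5 : Real.sqrt 5 ^ 2 = 5 := Real.sq_sqrt (by norm_num)
      have ih1 := lucas_real (n + 1)
      have ih0 := lucas_real n
      have e : ∀ c : ℝ, c ^ 2 = c + 1 → c ^ (n + 2) = c ^ (n + 1) + c ^ n := by
        intro c hc
        calc c ^ (n + 2) = c ^ n * c ^ 2 := by ring
          _ = c ^ n * (c + 1) := by rw [hc]
          _ = c ^ (n + 1) + c ^ n := by ring
      have hφ : ((1 + Real.sqrt 5) / 2) ^ 2 = (1 + Real.sqrt 5) / 2 + 1 := by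
        nlinarith [h5]
      have hψ : ((1 - Real.sqrt 5) / 2) ^ 2 = (1 - Real.sqrt 5) / 2 + 1 := by
        nlinarith [h5]
      rw [show lucas (n + 2) = lucas (n + 1) + lucas n from rfl, Nat.cast_add, ih1, ih0,
        e _ hφ, e _ hψ]
      ring

theorem stmt_18 (r : ℕ) (hr : 2 ≤ r) (hre : Even r) :
    Li2 (((1 + Real.sqrt 5) / 2) ^ r / (lucas r : ℝ))
        + Li2 (((1 - Real.sqrt 5) / 2) ^ r / (lucas r : ℝ)) =
      Real.pi ^ 2 / 6 + (r : ℝ) ^ 2 * Real.log ((1 + Real.sqrt 5) / 2) ^ 2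
        - Real.log (lucas r : ℝ) ^ 2 := by
  have hs5 : Real.sqrt 5 ^ 2 = 5 := Real.sq_sqrt (by norm_num)
  have hs1 : (1:ℝ) < Real.sqrt 5 := by
    nlinarith [Real.sqrt_nonneg 5]
  set A : ℝ := ((1 + Real.sqrt 5) / 2) ^ r with hA_def
  set B : ℝ := ((1 - Real.sqrt 5) / 2) ^ r with hB_def
  set L : ℝ := (lucas r : ℝ) with hL_def
  have hφ0 : (0:ℝ) < (1 + Real.sqrt 5) / 2 := by linarith
  have hψne : (1 - Real.sqrt 5) / 2 ≠ 0 := ne_of_lt (by linarith)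
  have hA : 0 < A := pow_pos hφ0 r
  have hB : 0 < B := hre.pow_pos hψne
  have hL : L = A + B := lucas_real r
  have hL0 : 0 < L := by rw [hL]; positivity
  have hx : A / L ∈ Ioo (0:ℝ) 1 :=
    ⟨div_pos hA hL0, (div_lt_one hL0).mpr (by rw [hL]; linarith)⟩
  have h1x : 1 - A / L = B / L := by
    rw [hL]
    field_simp
    ring
  have key := Li2_reflection hx
  rw [h1x] at key
  rw [key]
  have hBA : B = A⁻¹ := by
    have hmul : (1 - Real.sqrt 5) / 2 * ((1 + Real.sqrt 5) / 2) = -1 := by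
      nlinarith [hs5]
    have h1 : B * A = 1 := by
      rw [hA_def, hB_def, ← mul_pow, hmul]
      exact hre.neg_one_pow
    exact eq_inv_of_mul_eq_one_left h1
  have hlogA : Real.log A = r * Real.log ((1 + Real.sqrt 5) / 2) := by
    rw [hA_def, Real.log_pow]
  have hlogx : Real.log (A / L) = r * Real.log ((1 + Real.sqrt 5) / 2) - Real.log L := by
    rw [Real.log_div hA.ne' hL0.ne', hlogA]
  have hlogy : Real.log (B / L) = -(r * Real.log ((1 + Real.sqrt 5) / 2)) - Real.log L := by
    rw [Real.log_div hB.ne' hL0.ne', hBA, Real.log_inv, hlogA]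
  rw [hlogx, hlogy]
  ring
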